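/- Let C, p, s be natural numbers with C ≥ 1, p ≥ 2 and 4·s ≤ C·p. Let S be a finite set with |S| = C·p, partitioned into pairwise disjoint blocks B₁,…,B_p each of size C, let A be a uniform random s-subset of S, and let ρ be a real number with 0 < ρ < 1. If P(A ∩ B_i ≠ ∅ for all i = 1,…,p) ≥ ρ, then s ≥ (p/4)·log(p / log(1/ρ)). -/

import Mathlib

set_option maxHeartbeats 1000000


open Finset


/-- Pair-counting step: the density of a monotone family among `m`-subsets of `T`
is at most its density among `(m+1)`-subsets. -/
lemma density_step {α : Type*} [DecidableEq α] (T : Finset α) (E : Finset α → Prop)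
    [DecidablePred E] (hmono : ∀ Y x, E Y → E (insert x Y)) (m : ℕ) :
    ((T.powersetCard m).filter E).card * (T.card - m) ≤
      ((T.powersetCard (m+1)).filter E).card * (m + 1) := by
  classical
  set Em := (T.powersetCard m).filter E with hEm
  set Em1 := (T.powersetCard (m+1)).filter E with hEm1
  set P : Finset ((_ : Finset α) × α) := Em.sigma (fun Y => T \ Y) with hP
  have hcardP : P.card = Em.card * (T.card - m) := by
    rw [hP, Finset.card_sigma]
    rw [Finset.sum_congr rfl (fun Y hY => ?_), Finset.sum_const, smul_eq_mul]
    have hY' := Finset.mem_filter.mp hY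
    have := Finset.mem_powersetCard.mp hY'.1
    rw [Finset.card_sdiff_of_subset this.1, this.2]
  have hmaps : ∀ z ∈ P, (insert z.2 z.1 : Finset α) ∈ Em1 := by
    rintro ⟨Y, x⟩ hz
    rw [hP, Finset.mem_sigma] at hz
    obtain ⟨hY, hx⟩ := hz
    have hY' := Finset.mem_filter.mp hY
    obtain ⟨hYT, hYc⟩ := Finset.mem_powersetCard.mp hY'.1
    rw [Finset.mem_sdiff] at hx
    refine Finset.mem_filter.mpr ⟨Finset.mem_powersetCard.mpr ⟨?_, ?_⟩, hmono _ _ hY'.2⟩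
    · exact Finset.insert_subset hx.1 hYT
    · rw [Finset.card_insert_of_notMem hx.2, hYc]
  have hfib : ∀ Z ∈ Em1, (P.filter (fun z => insert z.2 z.1 = Z)).card ≤ m + 1 := by
    intro Z hZ
    have hZc : Z.card = m + 1 := (Finset.mem_powersetCard.mp (Finset.mem_filter.mp hZ).1).2
    rw [← hZc]
    apply Finset.card_le_card_of_injOn (fun z => z.2)
    · rintro ⟨Y, x⟩ hz
      rw [Finset.mem_coe, Finset.mem_filter] at hz
      rw [← hz.2]; exact Finset.mem_insert_self _ _
    · rintro ⟨Y, x⟩ hz ⟨Y', x'⟩ hz' (h : x = x')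
      rw [Finset.mem_coe, Finset.mem_filter, hP, Finset.mem_sigma] at hz hz'
      have hx : x ∉ Y := (Finset.mem_sdiff.mp hz.1.2).2
      have hx' : x' ∉ Y' := (Finset.mem_sdiff.mp hz'.1.2).2
      have : Y = Y' := by
        have e1 : (insert x Y).erase x = (insert x' Y').erase x' := by
          rw [hz.2, hz'.2, h]
        rwa [Finset.erase_insert hx, Finset.erase_insert hx'] at e1
      subst h; subst this; rfl
  calc Em.card * (T.card - m) = P.card := hcardP.symm
    _ ≤ (m + 1) * Em1.card :=
        Finset.card_le_mul_card_image_of_maps_to hmaps (m+1) hfib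
    _ = Em1.card * (m + 1) := mul_comm _ _


lemma density_mono {α : Type*} [DecidableEq α] (T : Finset α) (E : Finset α → Prop)
    [DecidablePred E] (hmono : ∀ Y x, E Y → E (insert x Y)) :
    ∀ m m' : ℕ, m ≤ m' →
    ((T.powersetCard m).filter E).card * T.card.choose m' ≤
      ((T.powersetCard m').filter E).card * T.card.choose m := by
  have hstep : ∀ m, ((T.powersetCard m).filter E).card * (T.card - m) ≤
      ((T.powersetCard (m+1)).filter E).card * (m + 1) := density_step T E hmono
  intro m m' h
  induction m' , h using Nat.le_induction with
  | base => rfl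
  | succ m' hmm' IH =>
    set e : ℕ → ℕ := fun b => ((T.powersetCard b).filter E).card with he
    set c : ℕ → ℕ := fun b => T.card.choose b with hc
    show e m * c (m'+1) ≤ e (m'+1) * c m
    by_cases hcm' : c m' = 0
    · have : T.card < m' := Nat.choose_eq_zero_iff.mp hcm'
      have : c (m'+1) = 0 := Nat.choose_eq_zero_iff.mpr (by omega)
      simp [this]
    · have hpos : 0 < (m'+1) * c m' := Nat.mul_pos (Nat.succ_pos _) (Nat.pos_of_ne_zero hcm')
      apply Nat.le_of_mul_le_mul_right _ hpos
      have hid : c (m'+1) * (m'+1) = c m' * (T.card - m') := Nat.choose_succ_right_eq _ _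
      calc e m * c (m'+1) * ((m'+1) * c m')
          = (e m * c m') * (c (m'+1) * (m'+1)) := by ring
        _ = (e m * c m') * (c m' * (T.card - m')) := by rw [hid]
        _ ≤ (e m' * c m) * (c m' * (T.card - m')) := by
            apply Nat.mul_le_mul_right; exact IH
        _ = (c m * c m') * (e m' * (T.card - m')) := by ring
        _ ≤ (c m * c m') * (e (m'+1) * (m'+1)) := by
            apply Nat.mul_le_mul_left; exact hstep m'
        _ = e (m'+1) * c m * ((m'+1) * c m') := by ring


lemma fiber_card {α : Type*} [DecidableEq α] (S B K : Finset α) (hB : B ⊆ S) (hK : K ⊆ B)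
    (s : ℕ) (hk : K.card ≤ s) (E : Finset α → Prop) [DecidablePred E]
    (hE : ∀ A : Finset α, E A ↔ E (A ∩ (S \ B))) :
    ((S.powersetCard s).filter (fun A => E A ∧ A ∩ B = K)).card
      = (((S \ B).powersetCard (s - K.card)).filter E).card := by
  classical
  apply Finset.card_bij (fun A _ => A \ B)
  · intro A hA
    rw [Finset.mem_filter, Finset.mem_powersetCard] at hA
    obtain ⟨⟨hAS, hAc⟩, hEA, hAB⟩ := hA
    have hKA : K ⊆ A := hAB ▸ Finset.inter_subset_left
    have hABeq : A \ B = A ∩ (S \ B) := by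
      ext a
      simp only [Finset.mem_sdiff, Finset.mem_inter]
      exact ⟨fun ⟨ha, hb⟩ => ⟨ha, hAS ha, hb⟩, fun ⟨ha, _, hb⟩ => ⟨ha, hb⟩⟩
    rw [Finset.mem_filter, Finset.mem_powersetCard]
    refine ⟨⟨Finset.sdiff_subset_sdiff hAS (le_refl B), ?_⟩, ?_⟩
    · have : A \ B = A \ K := by rw [← hAB, Finset.sdiff_inter_self_left]
      rw [this, Finset.card_sdiff_of_subset hKA, hAc]
    · rw [hABeq]; exact (hE A).mp hEA
  · intro A hA A' hA' hAA'
    rw [Finset.mem_filter] at hA hA'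
    have h1 : A = (A \ B) ∪ K := by rw [← hA.2.2, Finset.sdiff_union_inter]
    have h2 : A' = (A' \ B) ∪ K := by rw [← hA'.2.2, Finset.sdiff_union_inter]
    rw [h1, h2, hAA']
  · intro A' hA'
    rw [Finset.mem_filter, Finset.mem_powersetCard] at hA'
    obtain ⟨⟨hA'T, hA'c⟩, hEA'⟩ := hA'
    have hdisj : Disjoint A' K := by
      apply Finset.disjoint_left.mpr
      intro a ha hb
      exact (Finset.mem_sdiff.mp (hA'T ha)).2 (hK hb)
    have hint : (A' ∪ K) ∩ (S \ B) = A' := by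
      ext a
      simp only [Finset.mem_inter, Finset.mem_union, Finset.mem_sdiff]
      constructor
      · rintro ⟨ha | ha, hs, hb⟩
        · exact ha
        · exact absurd (hK ha) hb
      · intro ha
        have := Finset.mem_sdiff.mp (hA'T ha)
        exact ⟨Or.inl ha, this.1, this.2⟩
    refine ⟨A' ∪ K, ?_, ?_⟩
    · rw [Finset.mem_filter, Finset.mem_powersetCard]
      refine ⟨⟨?_, ?_⟩, ?_, ?_⟩
      · apply Finset.union_subset (fun a ha => (Finset.mem_sdiff.mp (hA'T ha)).1) (hK.trans hB)
      · rw [Finset.card_union_of_disjoint hdisj, hA'c]; omega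
      · exact (hE _).mpr (by rw [hint]; exact hEA')
      · ext a
        simp only [Finset.mem_inter, Finset.mem_union]
        constructor
        · rintro ⟨ha | ha, hb⟩
          · exact absurd hb (Finset.mem_sdiff.mp (hA'T ha)).2
          · exact ha
        · intro ha; exact ⟨Or.inr ha, hK ha⟩
    · rw [Finset.union_sdiff_distrib]
      have h1 : A' \ B = A' := Finset.sdiff_eq_self_of_disjoint
        (Finset.disjoint_left.mpr (fun a ha hb => (Finset.mem_sdiff.mp (hA'T ha)).2 hb))
      have h2 : K \ B = ∅ := Finset.sdiff_eq_empty_iff_subset.mpr hK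
      rw [h1, h2, Finset.union_empty]

lemma fiber_empty {α : Type*} [DecidableEq α] (S B K : Finset α)
    (s : ℕ) (hk : s < K.card) (E : Finset α → Prop) [DecidablePred E] :
    ((S.powersetCard s).filter (fun A => E A ∧ A ∩ B = K)).card = 0 := by
  rw [Finset.card_eq_zero, Finset.filter_eq_empty_iff]
  rintro A hA ⟨_, hAB⟩
  rw [Finset.mem_powersetCard] at hA
  have : K ⊆ A := hAB ▸ Finset.inter_subset_left
  have := Finset.card_le_card this
  omega

lemma hit_split {α : Type*} [DecidableEq α] (S Bk : Finset α) (hB : Bk ⊆ S) (s : ℕ)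
    (E : Finset α → Prop) [DecidablePred E]
    (hE : ∀ A : Finset α, E A ↔ E (A ∩ (S \ Bk))) :
    ((S.powersetCard s).filter E).card
      = ((S.powersetCard s).filter (fun A => E A ∧ (A ∩ Bk).Nonempty)).card
        + (((S \ Bk).powersetCard s).filter E).card := by
  classical
  have h := Finset.card_filter_add_card_filter_not
    (s := (S.powersetCard s).filter E) (p := fun A => (A ∩ Bk).Nonempty)
  rw [Finset.filter_filter, Finset.filter_filter] at h
  have h2 : ((S.powersetCard s).filter (fun A => E A ∧ ¬(A ∩ Bk).Nonempty)).card
      = (((S \ Bk).powersetCard s).filter E).card := by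
    have := fiber_card S Bk ∅ hB (Finset.empty_subset _) s (by simp) E hE
    simp only [Finset.card_empty, Nat.sub_zero] at this
    rw [← this]
    congr 1
    apply Finset.filter_congr
    intro A _
    rw [Finset.not_nonempty_iff_eq_empty]
  omega

lemma hit_sum {α : Type*} [DecidableEq α] (S Bk : Finset α) (s : ℕ)
    (E : Finset α → Prop) [DecidablePred E] :
    ((S.powersetCard s).filter (fun A => E A ∧ (A ∩ Bk).Nonempty)).card
      = ∑ K ∈ Bk.powerset.filter (fun K => K.Nonempty),
          ((S.powersetCard s).filter (fun A => E A ∧ A ∩ Bk = K)).card := by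
  classical
  rw [Finset.card_eq_sum_card_fiberwise
    (f := fun A => A ∩ Bk) (t := Bk.powerset.filter (fun K => K.Nonempty)) ?_]
  · apply Finset.sum_congr rfl
    intro K hK
    have hKne : K.Nonempty := (Finset.mem_filter.mp hK).2
    rw [Finset.filter_filter]
    congr 1
    apply Finset.filter_congr
    intro A _
    constructor
    · rintro ⟨⟨hEA, _⟩, h⟩; exact ⟨hEA, h⟩
    · rintro ⟨hEA, h⟩; exact ⟨⟨hEA, h ▸ hKne⟩, h⟩
  · intro A hA
    rw [Finset.mem_coe, Finset.mem_filter] at hA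
    exact Finset.mem_filter.mpr ⟨Finset.mem_powerset.mpr Finset.inter_subset_right, hA.2.2⟩

lemma hit_step {α : Type*} [DecidableEq α] (S Bk : Finset α) (hB : Bk ⊆ S) (s : ℕ)
    (E : Finset α → Prop) [DecidablePred E]
    (hE : ∀ A : Finset α, E A ↔ E (A ∩ (S \ Bk)))
    (hmono : ∀ Y x, E Y → E (insert x Y)) :
    ((S.powersetCard s).filter (fun A => E A ∧ (A ∩ Bk).Nonempty)).card * (S.powersetCard s).card
      ≤ ((S.powersetCard s).filter E).card *
        ((S.powersetCard s).filter (fun A => (A ∩ Bk).Nonempty)).card := by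
  classical
  set a := ((S.powersetCard s).filter (fun A => E A ∧ (A ∩ Bk).Nonempty)).card with ha
  set w := ((S.powersetCard s).filter (fun A => (A ∩ Bk).Nonempty)).card with hw
  set es := (((S \ Bk).powersetCard s).filter E).card with hes
  have hsplitE : ((S.powersetCard s).filter E).card = a + es := hit_split S Bk hB s E hE
  have hsplitAll : (S.powersetCard s).card = w + ((S \ Bk).powersetCard s).card := by
    have h0 := hit_split S Bk hB s (fun _ => True) (fun _ => Iff.rfl)
    simpa only [Finset.filter_true, true_and] using h0
  have hmain : a * ((S \ Bk).powersetCard s).card ≤ es * w := by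
    have hsumE := hit_sum S Bk s E
    have hsum1 := hit_sum S Bk s (fun _ => True)
    rw [ha, hw, hsumE]
    have hw2 : ((S.powersetCard s).filter (fun A => (A ∩ Bk).Nonempty)).card
        = ∑ K ∈ Bk.powerset.filter (fun K => K.Nonempty),
        ((S.powersetCard s).filter (fun A => (fun _ : Finset α => True) A ∧ A ∩ Bk = K)).card := by
      rw [← hsum1]
      congr 1
      apply Finset.filter_congr
      intro A _
      simp
    rw [hw2, Finset.sum_mul, Finset.mul_sum]
    apply Finset.sum_le_sum
    intro K hK
    rw [Finset.mem_filter, Finset.mem_powerset] at hK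
    by_cases hks : K.card ≤ s
    · rw [fiber_card S Bk K hB hK.1 s hks E hE,
        fiber_card S Bk K hB hK.1 s hks (fun _ => True) (fun _ => Iff.rfl)]
      simp only [Finset.filter_true, Finset.card_powersetCard]
      exact density_mono (S \ Bk) E hmono (s - K.card) s (Nat.sub_le _ _)
    · rw [fiber_empty S Bk K s (by omega) E]
      simp
  calc a * (S.powersetCard s).card
      = a * w + a * ((S \ Bk).powersetCard s).card := by rw [hsplitAll]; ring
    _ ≤ a * w + es * w := by omega
    _ = (a + es) * w := by ring
    _ = ((S.powersetCard s).filter E).card * w := by rw [hsplitE]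

/-- Combinatorial core of Theorem `TheoremOne`: the `C·p` subintervals are
partitioned into `p` blocks (intervals) of size `C`; if a uniform random
`s`-subset hits every block with probability at least `ρ`, then
`s ≥ (p/4)·log(p/log(1/ρ))`, i.e. `Ω(p log p)` samples are needed in one round.
Probabilities are counting ratios over the uniform distribution on `s`-element
subsets of `S`. -/

theorem one_round_sample_lower_bound {α : Type*} [DecidableEq α]
    (C p s : ℕ) (hC : 1 ≤ C) (hp : 2 ≤ p) (hs : 4 * s ≤ C * p)
    (S : Finset α) (hScard : S.card = C * p)
    (B : Fin p → Finset α) (hBsub : ∀ i, B i ⊆ S) (hBcard : ∀ i, (B i).card = C)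
    (hdisj : ∀ i j, i ≠ j → Disjoint (B i) (B j))
    (hcover : S = Finset.univ.biUnion B)
    (ρ : ℝ) (hρ0 : 0 < ρ) (hρ1 : ρ < 1)
    (hhit : ρ ≤ (((S.powersetCard s).filter (fun A => ∀ i, (A ∩ B i).Nonempty)).card : ℝ) /
        ((S.powersetCard s).card : ℝ)) :
    ((p : ℝ) / 4) * Real.log ((p : ℝ) / Real.log (1 / ρ)) ≤ (s : ℝ) := by
  classical
  set n := C * p with hn
  set nc := C * (p - 1) with hnc
  have hexp : n = nc + C := by
    have hp1 : p = (p - 1) + 1 := by omega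
    rw [hn, hnc]
    calc C * p = C * ((p - 1) + 1) := by rw [← hp1]
      _ = C * (p - 1) + C := by ring
  have hCnc : C ≤ nc := by
    rw [hnc]
    have h1 : 1 ≤ p - 1 := by omega
    calc C = C * 1 := (mul_one C).symm
      _ ≤ C * (p - 1) := Nat.mul_le_mul_left C h1
  have hncn : n - C = nc := by omega
  have hCn : C ≤ n := by omega
  have hsn : 4 * s ≤ n := hs
  have h2nc : n ≤ 2 * nc := by omega
  have hnc1 : 1 ≤ nc := by omega
  have h2s : 2 * s ≤ nc := by omega
  set Cns := (S.powersetCard s).card with hCns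
  have hCnsval : Cns = n.choose s := by rw [hCns, Finset.card_powersetCard, hScard]
  have hCnspos : 0 < Cns := by
    rw [hCnsval]; exact Nat.choose_pos (by omega)
  set chs := nc.choose s with hchs
  set W := Cns - chs with hW
  -- card of S \ B k
  have hTcard : ∀ k : Fin p, (S \ B k).card = nc := by
    intro k
    rw [Finset.card_sdiff_of_subset (hBsub k), hBcard, hScard, hncn]
  -- the H family
  set H : ℕ → ℕ := fun k =>
    ((S.powersetCard s).filter (fun A => ∀ i : Fin p, (i : ℕ) < k → (A ∩ B i).Nonempty)).card
    with hH
  -- hit count for each block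
  have hWk : ∀ k : Fin p,
      ((S.powersetCard s).filter (fun A => (A ∩ B k).Nonempty)).card = W ∧ chs ≤ Cns := by
    intro k
    have h0 := hit_split S (B k) (hBsub k) s (fun _ => True) (fun _ => Iff.rfl)
    simp only [Finset.filter_true, true_and] at h0
    rw [Finset.card_powersetCard, Finset.card_powersetCard, hTcard k, hScard] at h0
    constructor
    · omega
    · omega
  have hchsle : chs ≤ Cns := (hWk ⟨0, by omega⟩).2
  -- one step of telescoping
  have hstep : ∀ k : ℕ, (hk : k < p) → H (k + 1) * Cns ≤ H k * W := by
    intro k hk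
    set Bk := B ⟨k, hk⟩ with hBk
    set E : Finset α → Prop := fun A => ∀ i : Fin p, (i : ℕ) < k → (A ∩ B i).Nonempty with hE
    have hEdep : ∀ A : Finset α, E A ↔ E (A ∩ (S \ Bk)) := by
      intro A
      have key : ∀ i : Fin p, (i : ℕ) < k → (A ∩ (S \ Bk)) ∩ B i = A ∩ B i := by
        intro i hik
        ext a
        simp only [Finset.mem_inter, Finset.mem_sdiff]
        constructor
        · rintro ⟨⟨ha, _, _⟩, hb⟩; exact ⟨ha, hb⟩
        · rintro ⟨ha, hb⟩
          refine ⟨⟨ha, hBsub i hb, ?_⟩, hb⟩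
          have hne : i ≠ ⟨k, hk⟩ := by
            intro hcontra; rw [hcontra] at hik; simp at hik
          exact Finset.disjoint_left.mp (hdisj i ⟨k, hk⟩ hne) hb
      constructor
      · intro h i hik; rw [key i hik]; exact h i hik
      · intro h i hik; rw [← key i hik]; exact h i hik
    have hEmono : ∀ Y x, E Y → E (insert x Y) := by
      intro Y x hY i hik
      exact (hY i hik).mono (Finset.inter_subset_inter (Finset.subset_insert _ _) le_rfl)
    have hmainstep := hit_step S Bk (hBsub _) s E hEdep hEmono
    have hpred : ((S.powersetCard s).filter (fun A => E A ∧ (A ∩ Bk).Nonempty)).card = H (k+1) := by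
      congr 1
      apply Finset.filter_congr
      intro A _
      constructor
      · rintro ⟨h1, h2⟩ i hik
        rcases Nat.lt_succ_iff_lt_or_eq.mp hik with h | h
        · exact h1 i h
        · have : i = ⟨k, hk⟩ := Fin.ext h
          rw [this]; exact h2
      · intro h
        refine ⟨fun i hik => h i (by omega), h ⟨k, hk⟩ (by simp)⟩
    rw [hpred, (hWk ⟨k, hk⟩).1] at hmainstep
    exact hmainstep
  -- telescoping
  have htele : ∀ k, k ≤ p → H k * Cns ^ k ≤ Cns * W ^ k := by
    intro k
    induction k with
    | zero =>
      intro _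
      simp only [pow_zero, mul_one]
      calc H 0 ≤ (S.powersetCard s).card := Finset.card_filter_le _ _
        _ = Cns := rfl
    | succ k IH =>
      intro hk1
      have hkp : k < p := by omega
      calc H (k+1) * Cns ^ (k+1) = (H (k+1) * Cns) * Cns ^ k := by ring
        _ ≤ (H k * W) * Cns ^ k := Nat.mul_le_mul_right _ (hstep k hkp)
        _ = (H k * Cns ^ k) * W := by ring
        _ ≤ (Cns * W ^ k) * W := Nat.mul_le_mul_right _ (IH (by omega))
        _ = Cns * W ^ (k+1) := by ring
  have hHp : ((S.powersetCard s).filter (fun A => ∀ i, (A ∩ B i).Nonempty)).card = H p := by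
    congr 1
    apply Finset.filter_congr
    intro A _
    exact ⟨fun h i _ => h i, fun h i => h i i.isLt⟩
  -- pass to reals
  have hCrpos : (0 : ℝ) < (Cns : ℝ) := by exact_mod_cast hCnspos
  set q : ℝ := (chs : ℝ) / (Cns : ℝ) with hq
  have hq0 : 0 ≤ q := by positivity
  have hq1 : q ≤ 1 := by
    rw [hq, div_le_one hCrpos]; exact_mod_cast hchsle
  have hx : ((W : ℝ) / (Cns : ℝ)) = 1 - q := by
    rw [hW, hq]
    rw [Nat.cast_sub hchsle]
    field_simp
  -- ρ ≤ (1 - q)^p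
  have hρpow : ρ ≤ (1 - q) ^ p := by
    have h1 : (H p : ℝ) * (Cns : ℝ) ^ p ≤ (Cns : ℝ) * (W : ℝ) ^ p := by
      exact_mod_cast htele p le_rfl
    have h2 : (H p : ℝ) / (Cns : ℝ) ≤ ((W : ℝ) / (Cns : ℝ)) ^ p := by
      rw [div_pow, div_le_div_iff₀ hCrpos (by positivity)]
      calc (H p : ℝ) * (Cns : ℝ) ^ p ≤ (Cns : ℝ) * (W : ℝ) ^ p := h1
        _ = (W : ℝ) ^ p * (Cns : ℝ) := by ring
    rw [hx] at h2
    calc ρ ≤ ((H p : ℝ)) / (Cns : ℝ) := by rw [← hHp]; exact hhit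
      _ ≤ (1 - q) ^ p := h2
  -- ρ ≤ exp (-(p * q))
  have hρexp : ρ ≤ Real.exp (-((p : ℝ) * q)) := by
    have h1 : (1 - q) ≤ Real.exp (-q) := by
      have := Real.add_one_le_exp (-q); linarith
    have h2 : (1 - q) ^ p ≤ Real.exp (-q) ^ p :=
      pow_le_pow_left₀ (by linarith) h1 p
    calc ρ ≤ (1 - q) ^ p := hρpow
      _ ≤ Real.exp (-q) ^ p := h2
      _ = Real.exp (-((p:ℝ) * q)) := by rw [← Real.exp_nat_mul]; ring_nf
  set t := Real.log (1 / ρ) with ht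
  have htpos : 0 < t := by
    rw [ht]; apply Real.log_pos; rw [lt_div_iff₀ hρ0]; linarith
  have htval : t = -Real.log ρ := by rw [ht, one_div, Real.log_inv]
  have hpq : (p : ℝ) * q ≤ t := by
    have := Real.log_le_log hρ0 hρexp
    rw [Real.log_exp] at this
    rw [htval]; linarith
  -- lower bound on q
  have hratio : ∀ j : ℕ, j ≤ C →
      (n.choose s : ℝ) * (1 - (s : ℝ) / (nc : ℝ)) ^ j ≤ ((n - j).choose s : ℝ) := by
    intro j
    induction j with
    | zero => intro _; simp
    | succ j IH =>
      intro hj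
      have hjC : j ≤ C := by omega
      have IH' := IH hjC
      set β : ℝ := 1 - (s : ℝ) / (nc : ℝ) with hβ
      have hncpos : (0 : ℝ) < (nc : ℝ) := by exact_mod_cast hnc1
      have hβ0 : 0 ≤ β := by
        rw [hβ]
        have : (s : ℝ) / (nc : ℝ) ≤ 1 := by
          rw [div_le_one hncpos]; exact_mod_cast (by omega : s ≤ nc)
        linarith
      have hnj : nc ≤ n - j := by omega
      have hnjpos : (0:ℝ) < ((n - j : ℕ) : ℝ) := by
        have : 1 ≤ n - j := by omega
        exact_mod_cast this
      have hid : ((n - (j+1)).choose s) * (n - j) = (n - j).choose s * ((n - j) - s) := by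
        have h1 : n - (j+1) + 1 = n - j := by omega
        have := Nat.choose_mul_succ_eq (n - (j+1)) s
        rw [h1] at this
        exact this
      have hsnj : s ≤ n - j := by omega
      have hidR : ((n - (j+1)).choose s : ℝ) * ((n - j : ℕ) : ℝ)
          = ((n - j).choose s : ℝ) * (((n - j : ℕ) : ℝ) - (s : ℝ)) := by
        have h := congrArg (fun x : ℕ => (x : ℝ)) hid
        push_cast [Nat.cast_sub hsnj] at h
        exact h
      have hkey : ((n - j).choose s : ℝ) * β ≤ ((n - (j+1)).choose s : ℝ) := by
        rw [← mul_le_mul_iff_of_pos_right hnjpos, hidR]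
        have hineq : β * ((n - j : ℕ) : ℝ) ≤ ((n - j : ℕ) : ℝ) - (s : ℝ) := by
          rw [hβ]
          have h1 : (s : ℝ) ≤ (s : ℝ) * ((n - j : ℕ) : ℝ) / (nc : ℝ) := by
            rw [le_div_iff₀ hncpos]
            have : ((nc : ℕ) : ℝ) ≤ ((n - j : ℕ) : ℝ) := by exact_mod_cast hnj
            nlinarith [Nat.cast_nonneg (α := ℝ) s]
          have expand : (1 - (s : ℝ) / (nc : ℝ)) * ((n - j : ℕ) : ℝ)
              = ((n - j : ℕ) : ℝ) - (s : ℝ) * ((n - j : ℕ) : ℝ) / (nc : ℝ) := by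
            field_simp
          rw [expand]; linarith
        calc ((n - j).choose s : ℝ) * β * ((n - j : ℕ) : ℝ)
            = ((n - j).choose s : ℝ) * (β * ((n - j : ℕ) : ℝ)) := by ring
          _ ≤ ((n - j).choose s : ℝ) * (((n - j : ℕ) : ℝ) - (s : ℝ)) := by
              apply mul_le_mul_of_nonneg_left hineq (Nat.cast_nonneg _)
      calc (n.choose s : ℝ) * β ^ (j+1) = ((n.choose s : ℝ) * β ^ j) * β := by ring
        _ ≤ ((n - j).choose s : ℝ) * β := mul_le_mul_of_nonneg_right IH' hβ0
        _ ≤ ((n - (j+1)).choose s : ℝ) := hkey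
  have hqlow : (1 - (s : ℝ) / (nc : ℝ)) ^ C ≤ q := by
    have h1 := hratio C le_rfl
    rw [hncn] at h1
    rw [hq, le_div_iff₀ hCrpos]
    rw [hCnsval, hchs]
    calc (1 - (s : ℝ) / (nc : ℝ)) ^ C * (n.choose s : ℝ)
        = (n.choose s : ℝ) * (1 - (s : ℝ) / (nc : ℝ)) ^ C := by ring
      _ ≤ (nc.choose s : ℝ) := h1
  -- 1 - y ≥ exp(-(2 log 2) y) for y ∈ [0, 1/2]
  have hncpos : (0 : ℝ) < (nc : ℝ) := by exact_mod_cast hnc1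
  set y : ℝ := (s : ℝ) / (nc : ℝ) with hy
  have hy0 : 0 ≤ y := by positivity
  have hy12 : y ≤ 1/2 := by
    rw [hy, div_le_iff₀ hncpos]
    have : (2 : ℝ) * s ≤ (nc : ℝ) := by exact_mod_cast h2s
    linarith
  have hconv : Real.exp (-(2 * Real.log 2) * y) ≤ 1 - y := by
    have h := convexOn_exp.2 (Set.mem_univ (0 : ℝ)) (Set.mem_univ (-Real.log 2))
      (show (0:ℝ) ≤ 1 - 2 * y by linarith) (show (0:ℝ) ≤ 2 * y by linarith)
      (show (1 - 2 * y) + 2 * y = 1 by ring)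
    simp only [smul_eq_mul] at h
    have he1 : Real.exp 0 = 1 := Real.exp_zero
    have he2 : Real.exp (-Real.log 2) = 1/2 := by
      rw [Real.exp_neg, Real.exp_log (by norm_num : (0:ℝ) < 2)]
      norm_num
    have harg : (1 - 2*y) * 0 + 2*y * (-Real.log 2) = -(2 * Real.log 2) * y := by ring
    rw [harg, he1, he2] at h
    calc Real.exp (-(2 * Real.log 2) * y) ≤ (1 - 2*y) * 1 + 2*y * (1/2) := h
      _ = 1 - y := by ring
  have hqlow2 : Real.exp (-(4 * Real.log 2) * ((s : ℝ) / (p : ℝ))) ≤ q := by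
    have hppos : (0 : ℝ) < (p : ℝ) := by exact_mod_cast (by omega : 0 < p)
    have h1 : Real.exp (-(2 * Real.log 2) * y) ^ C ≤ (1 - y) ^ C :=
      pow_le_pow_left₀ (Real.exp_nonneg _) hconv C
    have h2 : Real.exp (-(2 * Real.log 2) * y) ^ C
        = Real.exp (-(2 * Real.log 2) * (y * C)) := by
      rw [← Real.exp_nat_mul]; ring_nf
    have hyC : y * C ≤ 2 * ((s : ℝ) / (p : ℝ)) := by
      have hCpos : (0 : ℝ) < (C : ℝ) := by exact_mod_cast hC
      have hnceq : (nc : ℝ) = (C : ℝ) * ((p : ℝ) - 1) := by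
        rw [hnc]
        push_cast [Nat.cast_sub (by omega : 1 ≤ p)]
        ring
      have hp2 : (2 : ℝ) ≤ (p : ℝ) := by exact_mod_cast hp
      have hp1pos : (0 : ℝ) < (p : ℝ) - 1 := by linarith
      have hyCval : y * C = (s : ℝ) / ((p : ℝ) - 1) := by
        rw [hy, hnceq]
        field_simp
      rw [hyCval, show 2 * ((s : ℝ) / (p : ℝ)) = (2 * (s:ℝ)) / (p:ℝ) by ring,
        div_le_div_iff₀ hp1pos hppos]
      nlinarith [Nat.cast_nonneg (α := ℝ) s]
    have hlog2pos : 0 < Real.log 2 := Real.log_pos (by norm_num)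
    have h3 : Real.exp (-(4 * Real.log 2) * ((s : ℝ) / (p : ℝ)))
        ≤ Real.exp (-(2 * Real.log 2) * (y * C)) := by
      apply Real.exp_le_exp.mpr
      nlinarith
    calc Real.exp (-(4 * Real.log 2) * ((s : ℝ) / (p : ℝ)))
        ≤ Real.exp (-(2 * Real.log 2) * (y * C)) := h3
      _ = Real.exp (-(2 * Real.log 2) * y) ^ C := h2.symm
      _ ≤ (1 - y) ^ C := h1
      _ ≤ q := hqlow
  -- finish
  have hppos : (0 : ℝ) < (p : ℝ) := by exact_mod_cast (by omega : 0 < p)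
  have hqt : q ≤ t / (p : ℝ) := by
    rw [le_div_iff₀ hppos]; linarith [hpq]
  have hfinal : Real.exp (-(4 * Real.log 2) * ((s : ℝ) / (p : ℝ))) ≤ t / (p : ℝ) :=
    le_trans hqlow2 hqt
  have hlogfinal : -(4 * Real.log 2) * ((s : ℝ) / (p : ℝ)) ≤ Real.log (t / (p : ℝ)) := by
    have := Real.log_le_log (Real.exp_pos _) hfinal
    rwa [Real.log_exp] at this
  have hlogdiv : Real.log (t / (p : ℝ)) = -Real.log ((p : ℝ) / t) := by
    rw [Real.log_div (ne_of_gt htpos) (ne_of_gt hppos),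
      Real.log_div (ne_of_gt hppos) (ne_of_gt htpos)]
    ring
  rw [hlogdiv] at hlogfinal
  have h4 : Real.log ((p : ℝ) / t) ≤ 4 * Real.log 2 * ((s : ℝ) / (p : ℝ)) := by linarith
  have hlog2lt : Real.log 2 < 1 := by
    have := Real.log_two_lt_d9
    linarith
  have h5 : (p : ℝ) * Real.log ((p : ℝ) / t) ≤ 4 * Real.log 2 * (s : ℝ) := by
    have := mul_le_mul_of_nonneg_left h4 (le_of_lt hppos)
    calc (p : ℝ) * Real.log ((p : ℝ) / t) ≤ (p:ℝ) * (4 * Real.log 2 * ((s : ℝ) / (p : ℝ))) := this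
      _ = 4 * Real.log 2 * (s : ℝ) := by field_simp
  have h6 : ((p : ℝ) / 4) * Real.log ((p : ℝ) / t) ≤ Real.log 2 * (s : ℝ) := by linarith
  have h7 : Real.log 2 * (s : ℝ) ≤ (s : ℝ) := by
    nlinarith [Nat.cast_nonneg (α := ℝ) s, Real.log_pos (show (1:ℝ) < 2 by norm_num)]
  calc ((p : ℝ) / 4) * Real.log ((p : ℝ) / t) ≤ Real.log 2 * (s : ℝ) := h6
    _ ≤ (s : ℝ) := h7
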